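/- Let E be a module with a bilinear bracket [·,·] and I : E → E linear. For all n ≥ 2 and all X, Y in E, the torsion of the n-th power of I satisfies: T(I^n)(X,Y) = T(I)(I^{n-1}X, I^{n-1}Y) + I(T(I^{n-1})(IX,Y) + T(I^{n-1})(X,IY)) - I^2(T(I^{n-2})(IX,IY)) + I^{2n-2}(T(I)(X,Y)). -/

import Mathlib

variable {R : Type*} [CommRing R] {E : Type*} [AddCommGroup E] [Module R E]

/-- The underlying binary operation of a bilinear bracket. -/
def br2 (b : E →ₗ[R] E →ₗ[R] E) : E → E → E := fun x y => b x y

/-- Deformation of a bracket `b` by an endomorphism `I`: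
`[X,Y]_I = [IX,Y] + [X,IY] - I [X,Y]`. -/
def deform (I : Module.End R E) (b : E → E → E) : E → E → E :=
  fun X Y => b (I X) Y + b X (I Y) - I (b X Y)

/-- Nijenhuis torsion of `I` with respect to the bracket `b`. -/
def torsion (I : Module.End R E) (b : E → E → E) : E → E → E :=
  fun X Y => b (I X) (I Y) - I (deform I b X Y)

theorem stmt2 (b : E →ₗ[R] E →ₗ[R] E) (I : Module.End R E) (n : ℕ) (hn : 2 ≤ n) (X Y : E) :
    torsion (I ^ n) (br2 b) X Y
      = torsion I (br2 b) ((I ^ (n - 1)) X) ((I ^ (n - 1)) Y)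
        + I (torsion (I ^ (n - 1)) (br2 b) (I X) Y
              + torsion (I ^ (n - 1)) (br2 b) X (I Y))
        - (I ^ 2) (torsion (I ^ (n - 2)) (br2 b) (I X) (I Y))
        + (I ^ (2 * n - 2)) (torsion I (br2 b) X Y) := by
  obtain ⟨k, rfl⟩ : ∃ k, n = k + 2 := ⟨n - 2, by omega⟩
  have h : ∀ z : E, I ((I ^ k) z) = (I ^ k) (I z) := fun z => by
    rw [← Module.End.mul_apply, ← Module.End.mul_apply, pow_mul_comm']
  simp only [torsion, deform, br2, show k + 2 - 1 = k + 1 from rfl, show k + 2 - 2 = k from rfl,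
    show 2 * (k + 2) - 2 = k + 1 + (k + 1) from by omega,
    pow_succ, pow_add, pow_zero, 
    Module.End.mul_apply, Module.End.one_apply, map_add, map_sub, h]
  abel
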